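/- Let f : G → H be a group homomorphism with f(P_G) ⊆ P_H, where P_G, P_H are conjugation-closed submonoids, and let φ : N_G → N_H denote the restriction of f to the unit groups of the cones. If φ is bijective, then the induced commutative square formed by f, the quotient maps η_G : G → G/N_G, η_H : H → H/N_H, and the induced map α : G/N_G → H/N_H is a pullback of groups: G ≅ (G/N_G) ×_{H/N_H} H. -/
import Mathlib


/-- If the restriction `φ : N_G → N_H` of a morphism of preordered groups
to the unit groups of the cones is bijective, then the square formed by `f`, the quotient
maps and the induced map `G ⧸ N_G → H ⧸ N_H` is a pullback of groups. -/
theorem stmt_10 (G H : Type*) [AddGroup G] [AddGroup H]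
    (P : AddSubmonoid G) (Q : AddSubmonoid H)
    (hconjG : ∀ g : G, ∀ p ∈ P, g + p - g ∈ P)
    (hconjH : ∀ h : H, ∀ q ∈ Q, h + q - h ∈ Q)
    (f : G →+ H) (hcone : ∀ p ∈ P, f p ∈ Q)
    (NG : AddSubgroup G) [NG.Normal] (hNG : ∀ x : G, x ∈ NG ↔ x ∈ P ∧ -x ∈ P)
    (NH : AddSubgroup H) [NH.Normal] (hNH : ∀ y : H, y ∈ NH ↔ y ∈ Q ∧ -y ∈ Q)
    -- the restriction of `f` to the unit groups is bijective:
    (hinj : ∀ n₁ ∈ NG, ∀ n₂ ∈ NG, f n₁ = f n₂ → n₁ = n₂)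
    (hsurj : ∀ m ∈ NH, ∃ n ∈ NG, f n = m) :
    ∃ hle : NG ≤ NH.comap f,
      ∀ (u : G ⧸ NG) (h : H),
        QuotientAddGroup.map NG NH f hle u = QuotientAddGroup.mk' NH h →
        ∃! g : G, QuotientAddGroup.mk' NG g = u ∧ f g = h := by
  have hle : NG ≤ NH.comap f := by
    intro x hx
    rw [hNG] at hx
    simp only [AddSubgroup.mem_comap]
    rw [hNH]
    exact ⟨hcone _ hx.1, by rw [← map_neg]; exact hcone _ hx.2⟩
  refine ⟨hle, ?_⟩
  intro u h hu
  obtain ⟨g₀, rfl⟩ := QuotientAddGroup.mk'_surjective NG u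
  rw [QuotientAddGroup.map_mk' NG NH f hle g₀] at hu
  have hm : -(f g₀) + h ∈ NH := QuotientAddGroup.eq.mp hu
  obtain ⟨n, hn, hfn⟩ := hsurj _ hm
  have hfg : f (g₀ + n) = h := by
    rw [map_add, hfn, add_neg_cancel_left]
  refine ⟨g₀ + n, ⟨?_, hfg⟩, ?_⟩
  · rw [QuotientAddGroup.mk'_eq_mk']
    exact ⟨-n, neg_mem hn, by simp⟩
  · rintro g' ⟨hg', hfg'⟩
    have hz : -(g₀ + n) + g' ∈ NG := by
      have h1 : -g₀ + g' ∈ NG := by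
        rw [QuotientAddGroup.mk'_eq_mk'] at hg'
        obtain ⟨z, hz, rfl⟩ := hg'
        simpa using hz
      have := add_mem (neg_mem hn) h1
      simpa [neg_add, add_assoc] using this
    have hfz : f (-(g₀ + n) + g') = f 0 := by
      rw [map_add, map_neg, hfg, hfg', map_zero, neg_add_cancel]
    have := hinj _ hz 0 (zero_mem _) hfz
    exact (neg_add_eq_zero.mp this).symm
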